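/- Let N ≥ 4 be an integer, Δθ = 2π/N, and let indices i be taken modulo N. Let g_i > 0 be constants and let ω : [0,T] → (ZMod N → ℝ) be differentiable with ω_i(t) > 0 satisfying ω̇_i = (1/g_i)·[ω_i²·(ω_{i+1} - 2ω_i + ω_{i-1})/(2·(1 - cos Δθ)) + ω_i³] for all i and t. Then for all t, d/dt ∑_{i=0}^{N-1} g_i·ln(ω_i(t)) = ∑_{i=0}^{N-1} [ω_i(t)² - (ω_{i+1}(t) - ω_i(t))²/(2·(1 - cos Δθ))]. -/

import Mathlib

open Real

/-- The discrete entropy identity: under the crystalline evolution with `gᵢ > 0`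
and `ωᵢ > 0`,
`d/dt ∑ᵢ gᵢ ln ωᵢ = ∑ᵢ [ωᵢ² - (ω_{i+1} - ωᵢ)²/(2(1 - cos Δθ))]`. -/
theorem stmt10 (N : ℕ) [NeZero N] (hN : 4 ≤ N) (Δθ : ℝ) (hΔθ : Δθ = 2 * π / N)
    (T : ℝ) (g : ZMod N → ℝ) (hg : ∀ i, 0 < g i)
    (ω : ℝ → ZMod N → ℝ)
    (hωpos : ∀ t ∈ Set.Icc (0:ℝ) T, ∀ i, 0 < ω t i)
    (hode : ∀ t ∈ Set.Icc (0:ℝ) T, ∀ i,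
      HasDerivWithinAt (fun s => ω s i)
        ((1 / g i) * ((ω t i) ^ 2 * (ω t (i + 1) - 2 * ω t i + ω t (i - 1))
            / (2 * (1 - Real.cos Δθ)) + (ω t i) ^ 3))
        (Set.Icc 0 T) t) :
    ∀ t ∈ Set.Icc (0:ℝ) T,
      HasDerivWithinAt (fun s => ∑ i : ZMod N, g i * Real.log (ω s i))
        (∑ i : ZMod N,
          ((ω t i) ^ 2 - (ω t (i + 1) - ω t i) ^ 2 / (2 * (1 - Real.cos Δθ))))
        (Set.Icc 0 T) t := by
  intro t ht
  have hNpos : (0:ℝ) < N := by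
    have : (4:ℝ) ≤ N := by exact_mod_cast hN
    linarith
  have hΔpos : 0 < Δθ := by
    rw [hΔθ]; positivity
  have hΔlt : Δθ < 2 * π := by
    rw [hΔθ]
    rw [div_lt_iff₀ hNpos]
    have h4 : (4:ℝ) ≤ N := by exact_mod_cast hN
    have h1N : (1:ℝ) < N := by linarith
    nlinarith [mul_lt_mul_of_pos_left h1N (by positivity : (0:ℝ) < 2 * π)]
  have hcos : Real.cos Δθ ≠ 1 := by
    intro h
    have := (Real.cos_eq_one_iff_of_lt_of_lt (by linarith) hΔlt).1 h
    linarith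
  have hc : (2 * (1 - Real.cos Δθ)) ≠ 0 := by
    have : Real.cos Δθ < 1 := lt_of_le_of_ne (Real.cos_le_one _) hcos
    intro h; nlinarith
  have hc1 : (1 - Real.cos Δθ) ≠ 0 := by
    intro h; apply hc; rw [h]; ring
  have hfne : ∀ i, ω t i ≠ 0 := fun i => (hωpos t ht i).ne'
  have hgne : ∀ i, g i ≠ 0 := fun i => (hg i).ne'
  have key : ∀ i : ZMod N, HasDerivWithinAt (fun s => g i * Real.log (ω s i))
      (g i * (((1 / g i) * ((ω t i) ^ 2 * (ω t (i + 1) - 2 * ω t i + ω t (i - 1))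
            / (2 * (1 - Real.cos Δθ)) + (ω t i) ^ 3)) / ω t i)) (Set.Icc 0 T) t :=
    fun i => ((hode t ht i).log (hfne i)).const_mul _
  have hsum := HasDerivWithinAt.fun_sum (fun i (_ : i ∈ Finset.univ) => key i)
  refine hsum.congr_deriv (Eq.symm ?_)
  set f := ω t with hf
  have hS : ∀ F : ZMod N → ℝ, ∑ i, F (i + 1) = ∑ i, F i := fun F =>
    Fintype.sum_equiv (Equiv.addRight 1) _ _ (fun i => rfl)
  have h1 : ∑ i : ZMod N, (f (i + 1)) ^ 2 = ∑ i : ZMod N, (f i) ^ 2 :=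
    hS (fun i => (f i) ^ 2)
  have h2 : ∑ i : ZMod N, f (i + 1) * f i = ∑ i : ZMod N, f i * f (i - 1) :=
    Fintype.sum_equiv (Equiv.addRight 1) _ _ (fun i => by simp)
  have aux : ∀ (G F F1 F2 C : ℝ), G ≠ 0 → F ≠ 0 → C ≠ 0 →
      G * (((1 / G) * (F ^ 2 * (F1 - 2 * F + F2) / C + F ^ 3)) / F)
      = F ^ 2 - (F1 - F) ^ 2 / C + (F1 ^ 2 - F * F1 - F ^ 2 + F * F2) / C := by
    intro G F F1 F2 C hG hF hC
    field_simp
    ring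
  have hterm : ∀ i : ZMod N,
      g i * (((1 / g i) * ((f i) ^ 2 * (f (i + 1) - 2 * f i + f (i - 1))
          / (2 * (1 - Real.cos Δθ)) + (f i) ^ 3)) / f i)
      = (f i) ^ 2 - (f (i + 1) - f i) ^ 2 / (2 * (1 - Real.cos Δθ))
        + ((f (i + 1)) ^ 2 - f i * f (i + 1) - (f i) ^ 2 + f i * f (i - 1))
          / (2 * (1 - Real.cos Δθ)) :=
    fun i => aux (g i) (f i) (f (i + 1)) (f (i - 1)) _ (hgne i) (hfne i) hc
  rw [Finset.sum_congr rfl (fun i _ => hterm i), Finset.sum_add_distrib,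
    ← Finset.sum_div]
  have hzero : ∑ i : ZMod N,
      ((f (i + 1)) ^ 2 - f i * f (i + 1) - (f i) ^ 2 + f i * f (i - 1)) = 0 := by
    rw [Finset.sum_add_distrib, Finset.sum_sub_distrib, Finset.sum_sub_distrib]
    have h3 : ∑ i : ZMod N, f i * f (i + 1) = ∑ i : ZMod N, f (i + 1) * f i := by
      simp [mul_comm]
    linarith [h1, h2, h3]
  rw [hzero]
  simp
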